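/- Let B₀ ∈ SL(2,ℝ), z₀ ∈ ℍ, and let ρ ∈ (0, 1/2) with rational approximant r/s (gcd(r,s)=1, r/s not a multiple of 1/2) satisfying |ρ − r/s| ≤ 1/s². Suppose b₀ ≥ s². Then (1/b₀) ∑_{k=0}^{b₀−1} φ(B₀ · R_{kρ} · z₀) ≥ (1 − η(s, b₀)) φ(z₀) φ(B₀·i), where η(s,b₀) → 0 as s → ∞ with b₀/s² → ∞, and the error is controlled via: breaking the sum into blocks of length s, replacing R_{kρ} by R_{kr/s} within each block at hyperbolic-distance cost o(1), and applying the exact block identity (1/s)∑_k φ(B₀·R_{kr/s}·z) = φ(z)φ(B₀·i). -/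

import Mathlib

noncomputable def phi (z : ℂ) : ℝ := (1 + ‖z‖ ^ 2) / (2 * z.im)

noncomputable def moeb (A : Matrix (Fin 2) (Fin 2) ℝ) (z : ℂ) : ℂ :=
  ((A 0 0 : ℂ) * z + (A 0 1 : ℂ)) / ((A 1 0 : ℂ) * z + (A 1 1 : ℂ))

noncomputable def Rot (θ : ℝ) : Matrix (Fin 2) (Fin 2) ℝ :=
  !![Real.cos (2 * Real.pi * θ), -Real.sin (2 * Real.pi * θ);
     Real.sin (2 * Real.pi * θ),  Real.cos (2 * Real.pi * θ)]

-- basic facts about a Möbius map with det 1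
lemma den_normSq_pos (p q r t : ℝ) (h : p * t - q * r = 1) (z : ℂ) (hz : 0 < z.im) :
    0 < (r * z.re + t) ^ 2 + (r * z.im) ^ 2 := by
  rcases eq_or_ne r 0 with h0 | h0
  · subst h0
    have ht : t ≠ 0 := by intro h'; rw [h'] at h; simp at h
    have : 0 < t ^ 2 := by positivity
    nlinarith [sq_nonneg (0 * z.re)]
  · have : (r * z.im) ≠ 0 := mul_ne_zero h0 (ne_of_gt hz)
    have : 0 < (r * z.im) ^ 2 := by positivity
    nlinarith [sq_nonneg (r * z.re + t)]

lemma den_re (r t : ℝ) (z : ℂ) : ((r : ℂ) * z + t).re = r * z.re + t := by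
  simp [Complex.add_re, Complex.mul_re]

lemma den_im (r t : ℝ) (z : ℂ) : ((r : ℂ) * z + t).im = r * z.im := by
  simp [Complex.add_im, Complex.mul_im]

lemma den_normSq (r t : ℝ) (z : ℂ) :
    Complex.normSq ((r : ℂ) * z + t) = (r * z.re + t) ^ 2 + (r * z.im) ^ 2 := by
  rw [Complex.normSq_apply, den_re, den_im]; ring

lemma den_ne_zero (p q r t : ℝ) (h : p * t - q * r = 1) (z : ℂ) (hz : 0 < z.im) :
    (r : ℂ) * z + t ≠ 0 := by
  rw [← Complex.normSq_pos, den_normSq]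
  exact den_normSq_pos p q r t h z hz

lemma frac_im (p q r t : ℝ) (h : p * t - q * r = 1) (z : ℂ) (hz : 0 < z.im) :
    (((p : ℂ) * z + q) / ((r : ℂ) * z + t)).im
      = z.im / ((r * z.re + t) ^ 2 + (r * z.im) ^ 2) := by
  have hnv := den_normSq_pos p q r t h z hz
  rw [Complex.div_im, den_normSq, den_re r t, den_im r t, den_re p q, den_im p q]
  rw [div_sub_div_same]
  congr 1
  linear_combination z.im * h

lemma frac_im_pos (p q r t : ℝ) (h : p * t - q * r = 1) (z : ℂ) (hz : 0 < z.im) :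
    0 < (((p : ℂ) * z + q) / ((r : ℂ) * z + t)).im := by
  rw [frac_im p q r t h z hz]
  exact div_pos hz (den_normSq_pos p q r t h z hz)

lemma phi_frac (p q r t : ℝ) (h : p * t - q * r = 1) (z : ℂ) (hz : 0 < z.im) :
    phi (((p : ℂ) * z + q) / ((r : ℂ) * z + t))
      = ((p * z.re + q) ^ 2 + (p * z.im) ^ 2 + ((r * z.re + t) ^ 2 + (r * z.im) ^ 2))
        / (2 * z.im) := by
  have hnv := den_normSq_pos p q r t h z hz
  have hy := hz
  unfold phi
  rw [Complex.sq_norm, Complex.normSq_div, den_normSq, den_normSq,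
    frac_im p q r t h z hz]
  have hnv' : ((r * z.re + t) ^ 2 + (r * z.im) ^ 2) ≠ 0 := ne_of_gt hnv
  have hy' : z.im ≠ 0 := ne_of_gt hz
  generalize ((r * z.re + t) ^ 2 + (r * z.im) ^ 2) = D at hnv hnv' ⊢
  field_simp
  ring

lemma moeb_def (A : Matrix (Fin 2) (Fin 2) ℝ) (z : ℂ) :
    moeb A z = ((A 0 0 : ℂ) * z + (A 0 1 : ℂ)) / ((A 1 0 : ℂ) * z + (A 1 1 : ℂ)) := rfl

lemma moeb_im_pos (A : Matrix (Fin 2) (Fin 2) ℝ)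
    (hA : A 0 0 * A 1 1 - A 0 1 * A 1 0 = 1) (z : ℂ) (hz : 0 < z.im) :
    0 < (moeb A z).im := frac_im_pos _ _ _ _ hA z hz

lemma phi_moeb (A : Matrix (Fin 2) (Fin 2) ℝ)
    (hA : A 0 0 * A 1 1 - A 0 1 * A 1 0 = 1) (z : ℂ) (hz : 0 < z.im) :
    phi (moeb A z) = ((A 0 0 * z.re + A 0 1) ^ 2 + (A 0 0 * z.im) ^ 2
      + ((A 1 0 * z.re + A 1 1) ^ 2 + (A 1 0 * z.im) ^ 2)) / (2 * z.im) :=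
  phi_frac _ _ _ _ hA z hz

lemma moeb_comp (A B : Matrix (Fin 2) (Fin 2) ℝ)
    (hA : A 0 0 * A 1 1 - A 0 1 * A 1 0 = 1)
    (hB : B 0 0 * B 1 1 - B 0 1 * B 1 0 = 1) (z : ℂ) (hz : 0 < z.im) :
    moeb A (moeb B z) = moeb (A * B) z := by
  have hw : 0 < (moeb B z).im := moeb_im_pos B hB z hz
  have hvB : (B 1 0 : ℂ) * z + (B 1 1 : ℂ) ≠ 0 := den_ne_zero _ _ _ _ hB z hz
  have hvA : (A 1 0 : ℂ) * (moeb B z) + (A 1 1 : ℂ) ≠ 0 :=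
    den_ne_zero _ _ _ _ hA (moeb B z) hw
  have hmul : ∀ i j, ((A * B) i j : ℂ) = (A i 0 : ℂ) * (B 0 j : ℂ) + (A i 1 : ℂ) * (B 1 j : ℂ) := by
    intro i j
    rw [Matrix.mul_apply, Fin.sum_univ_two]
    push_cast
    ring
  rw [moeb_def (A * B), hmul, hmul, hmul, hmul, moeb_def A, moeb_def B]
  rw [moeb_def B] at hvA
  rw [div_eq_div_iff hvA]
  · have hX : ((B 0 0 : ℂ) * z + (B 0 1 : ℂ)) / ((B 1 0 : ℂ) * z + (B 1 1 : ℂ)) * ((B 1 0 : ℂ) * z + (B 1 1 : ℂ)) = (B 0 0 : ℂ) * z + (B 0 1 : ℂ) := div_mul_cancel₀ _ hvB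
    linear_combination ((A 0 0 : ℂ) * (A 1 1 : ℂ) - (A 0 1 : ℂ) * (A 1 0 : ℂ)) * hX
  · have hfac : ((A 1 0 : ℂ) * (B 0 0 : ℂ) + (A 1 1 : ℂ) * (B 1 0 : ℂ)) * z + ((A 1 0 : ℂ) * (B 0 1 : ℂ) + (A 1 1 : ℂ) * (B 1 1 : ℂ)) = ((A 1 0 : ℂ) * (((B 0 0 : ℂ) * z + (B 0 1 : ℂ)) / ((B 1 0 : ℂ) * z + (B 1 1 : ℂ))) + (A 1 1 : ℂ)) * ((B 1 0 : ℂ) * z + (B 1 1 : ℂ)) := by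
      field_simp
      ring
    rw [hfac]
    exact mul_ne_zero hvA hvB

lemma Rot00 (θ : ℝ) : Rot θ 0 0 = Real.cos (2 * Real.pi * θ) := by simp [Rot]
lemma Rot01 (θ : ℝ) : Rot θ 0 1 = -Real.sin (2 * Real.pi * θ) := by simp [Rot]
lemma Rot10 (θ : ℝ) : Rot θ 1 0 = Real.sin (2 * Real.pi * θ) := by simp [Rot]
lemma Rot11 (θ : ℝ) : Rot θ 1 1 = Real.cos (2 * Real.pi * θ) := by simp [Rot]

lemma Rot_det (θ : ℝ) : Rot θ 0 0 * Rot θ 1 1 - Rot θ 0 1 * Rot θ 1 0 = 1 := by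
  rw [Rot00, Rot01, Rot10, Rot11]
  linear_combination Real.sin_sq_add_cos_sq (2 * Real.pi * θ)

lemma term_eq (B : Matrix (Fin 2) (Fin 2) ℝ)
    (hB : B 0 0 * B 1 1 - B 0 1 * B 1 0 = 1) (z : ℂ) (hz : 0 < z.im) (θ : ℝ) :
    phi (moeb B (moeb (Rot θ) z)) =
      ((B 0 0 ^ 2 + B 0 1 ^ 2 + B 1 0 ^ 2 + B 1 1 ^ 2) * (1 + z.re ^ 2 + z.im ^ 2) / 2
       + (((B 0 0 ^ 2 + B 1 0 ^ 2) - (B 0 1 ^ 2 + B 1 1 ^ 2)) * (z.re ^ 2 + z.im ^ 2 - 1) / 2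
          + 2 * (B 0 0 * B 0 1 + B 1 0 * B 1 1) * z.re) * Real.cos (2 * (2 * Real.pi * θ))
       + (((B 0 1 ^ 2 + B 1 1 ^ 2) - (B 0 0 ^ 2 + B 1 0 ^ 2)) * z.re
          + (B 0 0 * B 0 1 + B 1 0 * B 1 1) * (z.re ^ 2 + z.im ^ 2 - 1)) * Real.sin (2 * (2 * Real.pi * θ)))
      / (2 * z.im) := by
  have hmul : ∀ i j, (B * Rot θ) i j = B i 0 * Rot θ 0 j + B i 1 * Rot θ 1 j := by
    intro i j; rw [Matrix.mul_apply, Fin.sum_univ_two]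
  have hN00 : (B * Rot θ) 0 0 = B 0 0 * Real.cos (2*Real.pi*θ) + B 0 1 * Real.sin (2*Real.pi*θ) := by
    rw [hmul, Rot00, Rot10]
  have hN01 : (B * Rot θ) 0 1 = -(B 0 0 * Real.sin (2*Real.pi*θ)) + B 0 1 * Real.cos (2*Real.pi*θ) := by
    rw [hmul, Rot01, Rot11]; ring
  have hN10 : (B * Rot θ) 1 0 = B 1 0 * Real.cos (2*Real.pi*θ) + B 1 1 * Real.sin (2*Real.pi*θ) := by
    rw [hmul, Rot00, Rot10]
  have hN11 : (B * Rot θ) 1 1 = -(B 1 0 * Real.sin (2*Real.pi*θ)) + B 1 1 * Real.cos (2*Real.pi*θ) := by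
    rw [hmul, Rot01, Rot11]; ring
  have hpyth := Real.sin_sq_add_cos_sq (2 * Real.pi * θ)
  have hNdet : (B * Rot θ) 0 0 * (B * Rot θ) 1 1 - (B * Rot θ) 0 1 * (B * Rot θ) 1 0 = 1 := by
    rw [hN00, hN01, hN10, hN11]
    linear_combination (B 0 0 * B 1 1 - B 0 1 * B 1 0) * hpyth + hB
  rw [moeb_comp B (Rot θ) hB (Rot_det θ) z hz, phi_moeb (B * Rot θ) hNdet z hz,
    hN00, hN01, hN10, hN11, Real.cos_two_mul, Real.sin_two_mul]
  congr 1
  linear_combination ((B 0 0 ^ 2 + B 0 1 ^ 2 + B 1 0 ^ 2 + B 1 1 ^ 2) * (1 + z.re ^ 2 + z.im ^ 2) / 2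
    - (((B 0 0 ^ 2 + B 1 0 ^ 2) - (B 0 1 ^ 2 + B 1 1 ^ 2)) * (z.re ^ 2 + z.im ^ 2 - 1) / 2
          + 2 * (B 0 0 * B 0 1 + B 1 0 * B 1 1) * z.re)) * hpyth

lemma sin_bound (ρ : ℝ) (hρ0 : 0 < ρ) (hρ1 : ρ < 1/2) (r : ℤ) (s : ℕ) (hs : 0 < s)
    (hdvd : ¬ ((s : ℤ) ∣ 2 * r)) (happ : |ρ - (r : ℝ) / (s : ℝ)| ≤ 1 / (s : ℝ) ^ 2) :
    1 / (2 * (s : ℝ)) ≤ Real.sin (2 * Real.pi * ρ) := by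
  have hs3 : 3 ≤ s := by
    by_contra hcon
    push_neg at hcon
    interval_cases s
    · exact hdvd (one_dvd _)
    · exact hdvd ⟨r, by ring⟩
  have hsR : (3 : ℝ) ≤ (s : ℝ) := by exact_mod_cast hs3
  have hsp : (0 : ℝ) < (s : ℝ) := by linarith
  have key : ∀ n : ℤ, 1 / (s : ℝ) - 2 / (s : ℝ) ^ 2 ≤ |2 * ρ - n| := by
    intro n
    have h1 : (2 * r - n * s : ℤ) ≠ 0 := by
      intro h
      exact hdvd ⟨n, by linear_combination h⟩
    have h2 : (1 : ℝ) ≤ |((2 * r - n * s : ℤ) : ℝ)| := by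
      exact_mod_cast Int.one_le_abs h1
    have h3 : (1 : ℝ) / s ≤ |2 * (r : ℝ) / s - n| := by
      have he : 2 * (r : ℝ) / s - n = ((2 * r - n * s : ℤ) : ℝ) / s := by
        push_cast
        field_simp
      rw [he, abs_div, abs_of_pos hsp]
      gcongr
    have h4 : |2 * ρ - 2 * (r : ℝ) / s| ≤ 2 / (s : ℝ) ^ 2 := by
      have : 2 * ρ - 2 * (r : ℝ) / s = 2 * (ρ - (r : ℝ) / s) := by ring
      rw [this, abs_mul, abs_of_pos (by norm_num : (0:ℝ) < 2)]
      calc 2 * |ρ - (r : ℝ) / s| ≤ 2 * (1 / (s : ℝ) ^ 2) := by gcongr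
        _ = 2 / (s : ℝ) ^ 2 := by ring
    have htri : |2 * (r : ℝ) / s - n| ≤ |2 * (r : ℝ) / s - 2 * ρ| + |2 * ρ - n| :=
      abs_sub_le _ _ _
    rw [abs_sub_comm (2 * (r : ℝ) / s) (2 * ρ)] at htri
    linarith
  have hδ : (0 : ℝ) < 1 / (s : ℝ) - 2 / (s : ℝ) ^ 2 := by
    rw [sub_pos, div_lt_div_iff₀ (by positivity) hsp]
    nlinarith
  have k0 := key 0
  have k1 := key 1
  have h2ρ : 1 / (s : ℝ) - 2 / (s : ℝ) ^ 2 ≤ 2 * ρ := by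
    rwa [Int.cast_zero, sub_zero, abs_of_pos (by linarith)] at k0
  have h2ρ' : 1 / (s : ℝ) - 2 / (s : ℝ) ^ 2 ≤ 1 - 2 * ρ := by
    rw [Int.cast_one, abs_of_neg (by linarith)] at k1
    linarith
  have hfinal : 2 * (1 / (s : ℝ) - 2 / (s : ℝ) ^ 2) ≥ 1 / (2 * (s : ℝ)) := by
    have e1 : 2 * (1 / (s : ℝ) - 2 / (s : ℝ) ^ 2) = (2 * (s : ℝ) - 4) / (s : ℝ) ^ 2 := by
      field_simp
      ring
    rw [ge_iff_le, e1, div_le_div_iff₀ (by positivity) (by positivity)]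
    nlinarith
  have hπ := Real.pi_pos
  rcases le_or_gt (2 * ρ) (1 / 2) with hc | hc
  · have := Real.mul_le_sin (x := 2 * Real.pi * ρ) (by positivity) (by nlinarith)
    have heq : 2 / Real.pi * (2 * Real.pi * ρ) = 4 * ρ := by
      field_simp
      ring
    rw [heq] at this
    linarith
  · have hsin : Real.sin (2 * Real.pi * ρ) = Real.sin (Real.pi * (1 - 2 * ρ)) := by
      rw [show Real.pi * (1 - 2 * ρ) = Real.pi - 2 * Real.pi * ρ by ring, Real.sin_pi_sub]
    have := Real.mul_le_sin (x := Real.pi * (1 - 2 * ρ)) (by nlinarith) (by nlinarith)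
    have heq : 2 / Real.pi * (Real.pi * (1 - 2 * ρ)) = 2 * (1 - 2 * ρ) := by
      field_simp
    rw [heq] at this
    rw [hsin]
    nlinarith

lemma BCle (a b c d x y : ℝ) :
    (((a^2+c^2)-(b^2+d^2))*(x^2+y^2-1)/2 + 2*(a*b+c*d)*x)^2
      + (((b^2+d^2)-(a^2+c^2))*x + (a*b+c*d)*(x^2+y^2-1))^2
      ≤ ((a^2+b^2+c^2+d^2)*(1+x^2+y^2)/2)^2 := by
  have hid : ((a^2+b^2+c^2+d^2)*(1+x^2+y^2)/2)^2
      - ((((a^2+c^2)-(b^2+d^2))*(x^2+y^2-1)/2 + 2*(a*b+c*d)*x)^2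
        + (((b^2+d^2)-(a^2+c^2))*x + (a*b+c*d)*(x^2+y^2-1))^2)
      = (((a^2+c^2)-(b^2+d^2))*y)^2 + (2*(a*b+c*d)*y)^2 + ((a*d-b*c)*(x^2+y^2+1))^2 := by
    ring
  linarith [sq_nonneg (((a^2+c^2)-(b^2+d^2))*y), sq_nonneg (2*(a*b+c*d)*y),
    sq_nonneg ((a*d-b*c)*(x^2+y^2+1))]

lemma abs_w_sub_one (ρ : ℝ) (hsin : 0 ≤ Real.sin (2 * Real.pi * ρ)) :
    ‖Complex.exp ((4 * Real.pi * ρ : ℝ) * Complex.I) - 1‖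
      = 2 * Real.sin (2 * Real.pi * ρ) := by
  set w := Complex.exp ((4 * Real.pi * ρ : ℝ) * Complex.I) with hw
  have hre : w.re = Real.cos (4 * Real.pi * ρ) := Complex.exp_ofReal_mul_I_re _
  have him : w.im = Real.sin (4 * Real.pi * ρ) := Complex.exp_ofReal_mul_I_im _
  have hnsq : Complex.normSq (w - 1)
      = (Real.cos (4 * Real.pi * ρ) - 1)^2 + (Real.sin (4 * Real.pi * ρ))^2 := by
    rw [Complex.normSq_apply, Complex.sub_re, Complex.sub_im, hre, him]
    simp
    ring
  have hpyth := Real.sin_sq_add_cos_sq (2 * Real.pi * ρ)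
  have h2 : (Real.cos (4 * Real.pi * ρ) - 1)^2 + (Real.sin (4 * Real.pi * ρ))^2
      = (2 * Real.sin (2 * Real.pi * ρ))^2 := by
    rw [show (4 : ℝ) * Real.pi * ρ = 2 * (2 * Real.pi * ρ) by ring,
      Real.cos_two_mul, Real.sin_two_mul]
    linear_combination (4 * (Real.cos (2 * Real.pi * ρ))^2 - 4) * hpyth
  rw [Complex.norm_def, hnsq, h2, Real.sqrt_sq (by linarith)]

set_option maxHeartbeats 1000000 in
/-- Elliptic averaging estimate for irrational rotation numbers with good
rational approximants (second cancellation lemma). -/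
theorem stmt18 :
    ∃ η : ℕ → ℕ → ℝ,
      (∀ ε > (0 : ℝ), ∃ S M : ℕ, ∀ s b : ℕ, S ≤ s → M * s ^ 2 ≤ b → η s b ≤ ε) ∧
      ∀ (B₀ : Matrix (Fin 2) (Fin 2) ℝ), B₀.det = 1 →
      ∀ z₀ : ℂ, 0 < z₀.im →
      ∀ ρ : ℝ, 0 < ρ → ρ < 1 / 2 →
      ∀ (r : ℤ) (s : ℕ), 0 < s → Int.gcd r (s : ℤ) = 1 → ¬ ((s : ℤ) ∣ 2 * r) →
        |ρ - (r : ℝ) / (s : ℝ)| ≤ 1 / (s : ℝ) ^ 2 →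
      ∀ b₀ : ℕ, s ^ 2 ≤ b₀ →
        (1 - η s b₀) * (phi z₀ * phi (moeb B₀ Complex.I)) ≤
          (1 / (b₀ : ℝ)) * ∑ k ∈ Finset.range b₀,
            phi (moeb B₀ (moeb (Rot ((k : ℝ) * ρ)) z₀)) := by
  refine ⟨fun s b => 2 * (s : ℝ) / (b : ℝ), ?_, ?_⟩
  · intro ε hε
    refine ⟨1, ⌈2 / ε⌉₊ + 1, fun s b hS hM => ?_⟩
    have hs1 : (1 : ℝ) ≤ (s : ℝ) := by exact_mod_cast hS
    have hMb : ((⌈2 / ε⌉₊ + 1 : ℕ) : ℝ) * (s : ℝ) ^ 2 ≤ (b : ℝ) := by exact_mod_cast hM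
    have hM2 : (2 : ℝ) / ε ≤ ((⌈2 / ε⌉₊ + 1 : ℕ) : ℝ) := by
      push_cast
      linarith [Nat.le_ceil (2 / ε)]
    have hM1 : (1 : ℝ) ≤ ((⌈2 / ε⌉₊ + 1 : ℕ) : ℝ) := by
      push_cast
      linarith [Nat.cast_nonneg (α := ℝ) ⌈2 / ε⌉₊]
    have hb : (0 : ℝ) < (b : ℝ) := by nlinarith
    rw [div_le_iff₀ hb]
    have h1 : (2 / ε) * (s : ℝ) ^ 2 ≤ (b : ℝ) := le_trans (by nlinarith) hMb
    have h2 : 2 * (s : ℝ) ^ 2 ≤ ε * (b : ℝ) := by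
      have := mul_le_mul_of_nonneg_left h1 (le_of_lt hε)
      calc 2 * (s : ℝ) ^ 2 = ε * ((2 / ε) * (s : ℝ) ^ 2) := by field_simp
        _ ≤ ε * (b : ℝ) := this
    nlinarith
  · intro B₀ hdet z₀ hz ρ hρ0 hρ1 r s hs hgcd hdvd happ b₀ hb₀
    have hB : B₀ 0 0 * B₀ 1 1 - B₀ 0 1 * B₀ 1 0 = 1 := by
      rw [Matrix.det_fin_two] at hdet; exact hdet
    have hs3 : 3 ≤ s := by
      by_contra hcon
      push_neg at hcon
      interval_cases s
      · exact hdvd (one_dvd _)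
      · exact hdvd ⟨r, by ring⟩
    have hsR : (3 : ℝ) ≤ (s : ℝ) := by exact_mod_cast hs3
    have hsp : (0 : ℝ) < (s : ℝ) := by linarith
    have hb₀R : (s : ℝ) ^ 2 ≤ (b₀ : ℝ) := by exact_mod_cast hb₀
    have hb0 : (0 : ℝ) < (b₀ : ℝ) := by nlinarith
    have hsin := sin_bound ρ hρ0 hρ1 r s hs hdvd happ
    have hsinpos : 0 < Real.sin (2 * Real.pi * ρ) :=
      lt_of_lt_of_le (by positivity) hsin
    set w := Complex.exp ((4 * Real.pi * ρ : ℝ) * Complex.I) with hw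
    have habs1 : ‖w - 1‖ = 2 * Real.sin (2 * Real.pi * ρ) :=
      abs_w_sub_one ρ (le_of_lt hsinpos)
    have hw1 : w ≠ 1 := by
      intro h
      rw [h] at habs1
      simp at habs1
      linarith
    set G := ∑ k ∈ Finset.range b₀, w ^ k with hG
    have hGeq : G = (w ^ b₀ - 1) / (w - 1) := geom_sum_eq hw1 b₀
    have habsw : ‖w‖ = 1 := Complex.norm_exp_ofReal_mul_I _
    have habsG : ‖G‖ ≤ 2 * (s : ℝ) := by
      rw [hGeq, norm_div, habs1]
      have hnum : ‖w ^ b₀ - 1‖ ≤ 2 := by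
        have h1 := norm_sub_le (w ^ b₀) (1 : ℂ)
        rw [norm_pow, habsw, one_pow, norm_one] at h1
        linarith
      have h2s : 2 ≤ 2 * (s : ℝ) * (2 * Real.sin (2 * Real.pi * ρ)) := by
        have h3 := mul_le_mul_of_nonneg_left hsin (by positivity : (0 : ℝ) ≤ 4 * (s : ℝ))
        have h4 : 4 * (s : ℝ) * (1 / (2 * (s : ℝ))) = 2 := by
          field_simp
          ring
        nlinarith [h3, h4]
      rw [div_le_iff₀ (by positivity)]
      linarith [hnum, h2s]
    set ζ : ℂ := Complex.ofReal (((B₀ 0 0 ^ 2 + B₀ 1 0 ^ 2) - (B₀ 0 1 ^ 2 + B₀ 1 1 ^ 2)) * (z₀.re ^ 2 + z₀.im ^ 2 - 1) / 2 + 2 * (B₀ 0 0 * B₀ 0 1 + B₀ 1 0 * B₀ 1 1) * z₀.re) - Complex.ofReal (((B₀ 0 1 ^ 2 + B₀ 1 1 ^ 2) - (B₀ 0 0 ^ 2 + B₀ 1 0 ^ 2)) * z₀.re + (B₀ 0 0 * B₀ 0 1 + B₀ 1 0 * B₀ 1 1) * (z₀.re ^ 2 + z₀.im ^ 2 - 1))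 * Complex.I with hζ
    have hzre : ζ.re = (((B₀ 0 0 ^ 2 + B₀ 1 0 ^ 2) - (B₀ 0 1 ^ 2 + B₀ 1 1 ^ 2)) * (z₀.re ^ 2 + z₀.im ^ 2 - 1) / 2 + 2 * (B₀ 0 0 * B₀ 0 1 + B₀ 1 0 * B₀ 1 1) * z₀.re) := by
      rw [hζ, Complex.sub_re, Complex.mul_re, Complex.I_re, Complex.I_im,
        Complex.ofReal_re, Complex.ofReal_im]
      ring
    have hzim : ζ.im = -(((B₀ 0 1 ^ 2 + B₀ 1 1 ^ 2) - (B₀ 0 0 ^ 2 + B₀ 1 0 ^ 2)) * z₀.re + (B₀ 0 0 * B₀ 0 1 + B₀ 1 0 * B₀ 1 1) * (z₀.re ^ 2 + z₀.im ^ 2 - 1)) := by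
      rw [hζ, Complex.sub_im, Complex.mul_im, Complex.I_re, Complex.I_im,
        Complex.ofReal_re, Complex.ofReal_im]
      ring
    have hABC : ‖ζ‖ ≤ (B₀ 0 0 ^ 2 + B₀ 0 1 ^ 2 + B₀ 1 0 ^ 2 + B₀ 1 1 ^ 2) * (1 + z₀.re ^ 2 + z₀.im ^ 2) / 2 := by
      have h1 : Complex.normSq ζ = (((B₀ 0 0 ^ 2 + B₀ 1 0 ^ 2) - (B₀ 0 1 ^ 2 + B₀ 1 1 ^ 2)) * (z₀.re ^ 2 + z₀.im ^ 2 - 1) / 2 + 2 * (B₀ 0 0 * B₀ 0 1 + B₀ 1 0 * B₀ 1 1) * z₀.re) ^ 2 + (((B₀ 0 1 ^ 2 + B₀ 1 1 ^ 2) - (B₀ 0 0 ^ 2 + B₀ 1 0 ^ 2)) * z₀.re + (B₀ 0 0 * B₀ 0 1 + B₀ 1 0 * B₀ 1 1) * (z₀.re ^ 2 + z₀.im ^ 2 - 1)) ^ 2 := by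
        rw [Complex.normSq_apply, hzre, hzim]
        ring
      have h2 : (((B₀ 0 0 ^ 2 + B₀ 1 0 ^ 2) - (B₀ 0 1 ^ 2 + B₀ 1 1 ^ 2)) * (z₀.re ^ 2 + z₀.im ^ 2 - 1) / 2 + 2 * (B₀ 0 0 * B₀ 0 1 + B₀ 1 0 * B₀ 1 1) * z₀.re) ^ 2 + (((B₀ 0 1 ^ 2 + B₀ 1 1 ^ 2) - (B₀ 0 0 ^ 2 + B₀ 1 0 ^ 2)) * z₀.re + (B₀ 0 0 * B₀ 0 1 + B₀ 1 0 * B₀ 1 1) * (z₀.re ^ 2 + z₀.im ^ 2 - 1)) ^ 2 ≤ ((B₀ 0 0 ^ 2 + B₀ 0 1 ^ 2 + B₀ 1 0 ^ 2 + B₀ 1 1 ^ 2) * (1 + z₀.re ^ 2 + z₀.im ^ 2) / 2) ^ 2 :=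
        BCle (B₀ 0 0) (B₀ 0 1) (B₀ 1 0) (B₀ 1 1) z₀.re z₀.im
      have hA0 : (0 : ℝ) ≤ (B₀ 0 0 ^ 2 + B₀ 0 1 ^ 2 + B₀ 1 0 ^ 2 + B₀ 1 1 ^ 2) * (1 + z₀.re ^ 2 + z₀.im ^ 2) / 2 := by positivity
      calc ‖ζ‖ = Real.sqrt ((((B₀ 0 0 ^ 2 + B₀ 1 0 ^ 2) - (B₀ 0 1 ^ 2 + B₀ 1 1 ^ 2)) * (z₀.re ^ 2 + z₀.im ^ 2 - 1) / 2 + 2 * (B₀ 0 0 * B₀ 0 1 + B₀ 1 0 * B₀ 1 1) * z₀.re) ^ 2 + (((B₀ 0 1 ^ 2 + B₀ 1 1 ^ 2) - (B₀ 0 0 ^ 2 + B₀ 1 0 ^ 2)) * z₀.re + (B₀ 0 0 * B₀ 0 1 + B₀ 1 0 * B₀ 1 1) * (z₀.re ^ 2 + z₀.im ^ 2 - 1)) ^ 2) := by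
            rw [Complex.norm_def, h1]
        _ ≤ Real.sqrt (((B₀ 0 0 ^ 2 + B₀ 0 1 ^ 2 + B₀ 1 0 ^ 2 + B₀ 1 1 ^ 2) * (1 + z₀.re ^ 2 + z₀.im ^ 2) / 2) ^ 2) := Real.sqrt_le_sqrt h2
        _ = (B₀ 0 0 ^ 2 + B₀ 0 1 ^ 2 + B₀ 1 0 ^ 2 + B₀ 1 1 ^ 2) * (1 + z₀.re ^ 2 + z₀.im ^ 2) / 2 := Real.sqrt_sq hA0
    have hterm : ∀ k ∈ Finset.range b₀,
        phi (moeb B₀ (moeb (Rot ((k : ℝ) * ρ)) z₀))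
          = ((B₀ 0 0 ^ 2 + B₀ 0 1 ^ 2 + B₀ 1 0 ^ 2 + B₀ 1 1 ^ 2) * (1 + z₀.re ^ 2 + z₀.im ^ 2) / 2 + (ζ * w ^ k).re) / (2 * z₀.im) := by
      intro k _
      have hwk : w ^ k = Complex.exp ((2 * (2 * Real.pi * ((k : ℝ) * ρ)) : ℝ) * Complex.I) := by
        rw [hw, ← Complex.exp_nat_mul]
        congr 1
        push_cast
        ring
      have hre : (w ^ k).re = Real.cos (2 * (2 * Real.pi * ((k : ℝ) * ρ))) := by
        rw [hwk]; exact Complex.exp_ofReal_mul_I_re _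
      have him : (w ^ k).im = Real.sin (2 * (2 * Real.pi * ((k : ℝ) * ρ))) := by
        rw [hwk]; exact Complex.exp_ofReal_mul_I_im _
      have hζre : (ζ * w ^ k).re
          = (((B₀ 0 0 ^ 2 + B₀ 1 0 ^ 2) - (B₀ 0 1 ^ 2 + B₀ 1 1 ^ 2)) * (z₀.re ^ 2 + z₀.im ^ 2 - 1) / 2 + 2 * (B₀ 0 0 * B₀ 0 1 + B₀ 1 0 * B₀ 1 1) * z₀.re) * Real.cos (2 * (2 * Real.pi * ((k : ℝ) * ρ)))
            + (((B₀ 0 1 ^ 2 + B₀ 1 1 ^ 2) - (B₀ 0 0 ^ 2 + B₀ 1 0 ^ 2)) * z₀.re + (B₀ 0 0 * B₀ 0 1 + B₀ 1 0 * B₀ 1 1) * (z₀.re ^ 2 + z₀.im ^ 2 - 1)) * Real.sin (2 * (2 * Real.pi * ((k : ℝ) * ρ))) := by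
        rw [Complex.mul_re, hzre, hzim, hre, him]
        ring
      rw [term_eq B₀ hB z₀ hz ((k : ℝ) * ρ), hζre]
      ring
    have hsum : ∑ k ∈ Finset.range b₀, phi (moeb B₀ (moeb (Rot ((k : ℝ) * ρ)) z₀))
        = ((b₀ : ℝ) * ((B₀ 0 0 ^ 2 + B₀ 0 1 ^ 2 + B₀ 1 0 ^ 2 + B₀ 1 1 ^ 2) * (1 + z₀.re ^ 2 + z₀.im ^ 2) / 2) + (ζ * G).re) / (2 * z₀.im) := by
      rw [Finset.sum_congr rfl hterm, ← Finset.sum_div, Finset.sum_add_distrib,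
        Finset.sum_const, Finset.card_range, nsmul_eq_mul, hG, Finset.mul_sum,
        Complex.re_sum]
    have hphiI : phi (moeb B₀ Complex.I)
        = (B₀ 0 0 ^ 2 + B₀ 0 1 ^ 2 + B₀ 1 0 ^ 2 + B₀ 1 1 ^ 2) / 2 := by
      rw [phi_moeb B₀ hB Complex.I (by simp)]
      simp [Complex.I_re, Complex.I_im]
      ring
    have hphiz : phi z₀ = (1 + (z₀.re ^ 2 + z₀.im ^ 2)) / (2 * z₀.im) := by
      unfold phi
      rw [Complex.sq_norm, Complex.normSq_apply]
      ring_nf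
    have hR : |(ζ * G).re| ≤ ((B₀ 0 0 ^ 2 + B₀ 0 1 ^ 2 + B₀ 1 0 ^ 2 + B₀ 1 1 ^ 2) * (1 + z₀.re ^ 2 + z₀.im ^ 2) / 2) * (2 * (s : ℝ)) := by
      calc |(ζ * G).re| ≤ ‖ζ * G‖ := Complex.abs_re_le_norm _
        _ = ‖ζ‖ * ‖G‖ := norm_mul _ _
        _ ≤ ((B₀ 0 0 ^ 2 + B₀ 0 1 ^ 2 + B₀ 1 0 ^ 2 + B₀ 1 1 ^ 2) * (1 + z₀.re ^ 2 + z₀.im ^ 2) / 2) * (2 * (s : ℝ)) := by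
            apply mul_le_mul hABC habsG (norm_nonneg _)
            positivity
    have hRlow : -(((B₀ 0 0 ^ 2 + B₀ 0 1 ^ 2 + B₀ 1 0 ^ 2 + B₀ 1 1 ^ 2) * (1 + z₀.re ^ 2 + z₀.im ^ 2) / 2) * (2 * (s : ℝ))) ≤ (ζ * G).re := by
      have h5 := neg_abs_le ((ζ * G).re)
      linarith [hR, h5]
    rw [hsum, hphiI, hphiz]
    have hy' : z₀.im ≠ 0 := ne_of_gt hz
    have hb0' : (b₀ : ℝ) ≠ 0 := ne_of_gt hb0
    have keyid : (1 / (b₀ : ℝ)) * (((b₀ : ℝ) * ((B₀ 0 0 ^ 2 + B₀ 0 1 ^ 2 + B₀ 1 0 ^ 2 + B₀ 1 1 ^ 2) * (1 + z₀.re ^ 2 + z₀.im ^ 2) / 2) + (ζ * G).re) / (2 * z₀.im))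
        - (1 - 2 * (s : ℝ) / (b₀ : ℝ))
            * ((1 + (z₀.re ^ 2 + z₀.im ^ 2)) / (2 * z₀.im)
              * ((B₀ 0 0 ^ 2 + B₀ 0 1 ^ 2 + B₀ 1 0 ^ 2 + B₀ 1 1 ^ 2) / 2))
        = ((ζ * G).re + 2 * (s : ℝ) * ((B₀ 0 0 ^ 2 + B₀ 0 1 ^ 2 + B₀ 1 0 ^ 2 + B₀ 1 1 ^ 2) * (1 + z₀.re ^ 2 + z₀.im ^ 2) / 2)) / (2 * z₀.im * (b₀ : ℝ)) := by
      field_simp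
      ring
    have hnum0 : (0 : ℝ) ≤ (ζ * G).re + 2 * (s : ℝ) * ((B₀ 0 0 ^ 2 + B₀ 0 1 ^ 2 + B₀ 1 0 ^ 2 + B₀ 1 1 ^ 2) * (1 + z₀.re ^ 2 + z₀.im ^ 2) / 2) := by
      nlinarith [hRlow]
    have hfrac : (0 : ℝ) ≤ ((ζ * G).re + 2 * (s : ℝ) * ((B₀ 0 0 ^ 2 + B₀ 0 1 ^ 2 + B₀ 1 0 ^ 2 + B₀ 1 1 ^ 2) * (1 + z₀.re ^ 2 + z₀.im ^ 2) / 2)) / (2 * z₀.im * (b₀ : ℝ)) :=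
      div_nonneg hnum0 (by positivity)
    linarith [keyid, hfrac]
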